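/- Margin-based gradient lower bound (Polyak-type condition) for the exponential loss: for every w ∈ ℝ^d, the dual norm of the gradient satisfies ‖∇L(w)‖_* ≥ γ · L(w), where γ = max_{‖w'‖≤1} min_n ⟨x_n, w'⟩ is the ‖·‖-maximum margin. -/

import Mathlib

open scoped RealInnerProductSpace BigOperators
open Filter


/-- The dual norm `‖v‖_* = sup {⟨v, u⟩ : ‖u‖ ≤ 1}` of a (general) norm `nrm` on `ℝ^d`. -/
noncomputable def dualNorm {d : ℕ} (nrm : EuclideanSpace ℝ (Fin d) → ℝ)
    (v : EuclideanSpace ℝ (Fin d)) : ℝ :=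
  sSup ((fun u => ⟪v, u⟫) '' {u | nrm u ≤ 1})
/-- The exponential loss `L(w) = ∑ₙ exp(-⟨w, xₙ⟩)`. -/
noncomputable def expLoss {d N : ℕ} (x : Fin N → EuclideanSpace ℝ (Fin d))
    (w : EuclideanSpace ℝ (Fin d)) : ℝ :=
  ∑ n, Real.exp (-⟪w, x n⟫)

/-- The gradient of the exponential loss, `∇L(w) = -∑ₙ exp(-⟨w, xₙ⟩) xₙ`. -/
noncomputable def expLossGrad {d N : ℕ} (x : Fin N → EuclideanSpace ℝ (Fin d))
    (w : EuclideanSpace ℝ (Fin d)) : EuclideanSpace ℝ (Fin d) :=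
  -∑ n, Real.exp (-⟪w, x n⟫) • x n

lemma nrm_sum_le' {d : ℕ} (nrm : EuclideanSpace ℝ (Fin d) → ℝ)
    (hzero : nrm 0 = 0)
    (hadd : ∀ u v, nrm (u + v) ≤ nrm u + nrm v)
    {ι : Type*} (s : Finset ι) (f : ι → EuclideanSpace ℝ (Fin d)) :
    nrm (∑ i ∈ s, f i) ≤ ∑ i ∈ s, nrm (f i) := by
  classical
  induction s using Finset.induction with
  | empty => simp [hzero]
  | insert _ _ h ih =>
    rw [Finset.sum_insert h, Finset.sum_insert h]
    exact le_trans (hadd _ _) (by linarith)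

lemma exists_pos_mul_norm_le {d : ℕ} (nrm : EuclideanSpace ℝ (Fin d) → ℝ)
    (hnrm_nonneg : ∀ v, 0 ≤ nrm v)
    (hnrm_eq_zero : ∀ v, nrm v = 0 ↔ v = 0)
    (hnrm_smul : ∀ (c : ℝ) v, nrm (c • v) = |c| * nrm v)
    (hnrm_add : ∀ u v, nrm (u + v) ≤ nrm u + nrm v) :
    ∃ m : ℝ, 0 < m ∧ ∀ u, m * ‖u‖ ≤ nrm u := by
  have hzero : nrm 0 = 0 := (hnrm_eq_zero 0).mpr rfl
  by_cases hd : d = 0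
  · subst hd
    refine ⟨1, one_pos, fun u => ?_⟩
    have hu : u = 0 := Subsingleton.elim u 0
    simp [hu, hzero]
  -- decomposition
  have hdecomp : ∀ u : EuclideanSpace ℝ (Fin d),
      u = ∑ i, u i • EuclideanSpace.single i (1:ℝ) := by
    intro u
    have := (EuclideanSpace.basisFun (Fin d) ℝ).sum_repr u
    simp only [EuclideanSpace.basisFun_apply, EuclideanSpace.basisFun_repr] at this
    exact this.symm
  set C : ℝ := ∑ i, nrm (EuclideanSpace.single i (1:ℝ)) with hC
  have hCnonneg : 0 ≤ C := Finset.sum_nonneg fun i _ => hnrm_nonneg _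
  have hle : ∀ u : EuclideanSpace ℝ (Fin d), nrm u ≤ C * ‖u‖ := by
    intro u
    calc nrm u = nrm (∑ i, u i • EuclideanSpace.single i (1:ℝ)) := by rw [← hdecomp]
    _ ≤ ∑ i, nrm (u i • EuclideanSpace.single i (1:ℝ)) := nrm_sum_le' nrm hzero hnrm_add _ _
    _ = ∑ i, |u i| * nrm (EuclideanSpace.single i (1:ℝ)) := by simp [hnrm_smul]
    _ ≤ ∑ i, ‖u‖ * nrm (EuclideanSpace.single i (1:ℝ)) := by
        refine Finset.sum_le_sum fun i _ => ?_
        have h1 : |u i| ≤ ‖u‖ := by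
          have := EuclideanSpace.norm_eq u
          nlinarith [Finset.single_le_sum (f := fun j => ‖u j‖^2)
            (fun j _ => sq_nonneg ‖u j‖) (Finset.mem_univ i),
            Real.sq_sqrt (Finset.sum_nonneg (fun j (_ : j ∈ Finset.univ) => sq_nonneg ‖u j‖)),
            norm_nonneg u, abs_nonneg (u i), Real.norm_eq_abs (u i), sq_abs (u i)]
        exact mul_le_mul_of_nonneg_right h1 (hnrm_nonneg _)
    _ = C * ‖u‖ := by rw [← Finset.mul_sum, mul_comm]
  have hcont : Continuous nrm := by
    have hlip : LipschitzWith (Real.toNNReal C) nrm := by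
      refine LipschitzWith.of_dist_le_mul fun u v => ?_
      have h1 : nrm u ≤ nrm v + nrm (u - v) := by
        have := hnrm_add v (u - v); simpa using this
      have h2 : nrm v ≤ nrm u + nrm (v - u) := by
        have := hnrm_add u (v - u); simpa using this
      have h3 : nrm (u - v) ≤ C * ‖u - v‖ := hle _
      have h4 : nrm (v - u) ≤ C * ‖v - u‖ := hle _
      have h5 : ‖v - u‖ = ‖u - v‖ := norm_sub_rev _ _
      rw [Real.dist_eq, dist_eq_norm, Real.coe_toNNReal _ hCnonneg]
      rw [h5] at h4
      rw [abs_le]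
      constructor <;> linarith
    exact hlip.continuous
  -- sphere
  have hsne : (Metric.sphere (0 : EuclideanSpace ℝ (Fin d)) 1).Nonempty := by
    refine ⟨EuclideanSpace.single ⟨0, Nat.pos_of_ne_zero hd⟩ (1:ℝ), ?_⟩
    simp [EuclideanSpace.norm_single]
  obtain ⟨u₀, hu₀mem, hu₀min⟩ := (isCompact_sphere (0 : EuclideanSpace ℝ (Fin d)) 1).exists_isMinOn
    hsne hcont.continuousOn
  have hu₀n : ‖u₀‖ = 1 := by simpa using hu₀mem
  have hu₀ne : u₀ ≠ 0 := by
    intro h; rw [h] at hu₀n; simp at hu₀n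
  have hmpos : 0 < nrm u₀ :=
    lt_of_le_of_ne (hnrm_nonneg u₀) (fun h => hu₀ne ((hnrm_eq_zero u₀).mp h.symm))
  refine ⟨nrm u₀, hmpos, fun u => ?_⟩
  rcases eq_or_ne u 0 with rfl | hu
  · simp [hzero]
  · have hnu : 0 < ‖u‖ := norm_pos_iff.mpr hu
    have hmem : (‖u‖⁻¹ • u) ∈ Metric.sphere (0 : EuclideanSpace ℝ (Fin d)) 1 := by
      simp [norm_smul, abs_of_pos (inv_pos.mpr hnu), inv_mul_cancel₀ hnu.ne']
    have h6 : nrm u₀ ≤ nrm (‖u‖⁻¹ • u) := hu₀min hmem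
    have h2 : nrm (‖u‖⁻¹ • u) = ‖u‖⁻¹ * nrm u := by
      rw [hnrm_smul, abs_of_pos (inv_pos.mpr hnu)]
    rw [h2] at h6
    calc nrm u₀ * ‖u‖ ≤ (‖u‖⁻¹ * nrm u) * ‖u‖ := by
          exact mul_le_mul_of_nonneg_right h6 hnu.le
    _ = nrm u := by field_simp

/-- Polyak-type margin condition for the exponential loss: `‖∇L(w)‖_* ≥ γ L(w)` for every
`w`, where `γ = max_{‖w'‖≤1} minₙ ⟨xₙ, w'⟩` is the `‖·‖`-max margin. -/
theorem expLoss_grad_dualNorm_ge_margin_mul_loss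
    {d N : ℕ} (nrm : EuclideanSpace ℝ (Fin d) → ℝ)
    (hnrm_nonneg : ∀ v, 0 ≤ nrm v)
    (hnrm_eq_zero : ∀ v, nrm v = 0 ↔ v = 0)
    (hnrm_smul : ∀ (c : ℝ) v, nrm (c • v) = |c| * nrm v)
    (hnrm_add : ∀ u v, nrm (u + v) ≤ nrm u + nrm v)
    (x : Fin N → EuclideanSpace ℝ (Fin d))
    (hNe : (Finset.univ : Finset (Fin N)).Nonempty)
    (γ : ℝ)
    (hγ : IsGreatest {m : ℝ | ∃ u : EuclideanSpace ℝ (Fin d), nrm u ≤ 1 ∧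
        m = Finset.univ.inf' hNe (fun n => ⟪x n, u⟫)} γ)
    (w : EuclideanSpace ℝ (Fin d)) :
    γ * expLoss x w ≤ dualNorm nrm (expLossGrad x w) := by
  obtain ⟨u, hu1, hγeq⟩ := hγ.1
  obtain ⟨m, hm, hmle⟩ := exists_pos_mul_norm_le nrm hnrm_nonneg hnrm_eq_zero hnrm_smul hnrm_add
  set g := expLossGrad x w with hg
  have hbdd : BddAbove ((fun u => ⟪g, u⟫) '' {u | nrm u ≤ 1}) := by
    refine ⟨‖g‖ * m⁻¹, ?_⟩
    rintro a ⟨v, hv, rfl⟩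
    have hv1 : nrm v ≤ 1 := hv
    have hvn : ‖v‖ ≤ m⁻¹ := by
      have h := (hmle v).trans hv1
      calc ‖v‖ = (m * ‖v‖) * m⁻¹ := by field_simp
      _ ≤ 1 * m⁻¹ := mul_le_mul_of_nonneg_right h (inv_nonneg.mpr hm.le)
      _ = m⁻¹ := one_mul _
    calc ⟪g, v⟫ ≤ ‖g‖ * ‖v‖ := real_inner_le_norm _ _
    _ ≤ ‖g‖ * m⁻¹ := mul_le_mul_of_nonneg_left hvn (norm_nonneg g)
  have hmem : ⟪g, -u⟫ ∈ ((fun u => ⟪g, u⟫) '' {u | nrm u ≤ 1}) := by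
    refine ⟨-u, ?_, rfl⟩
    have : nrm (-u) = nrm u := by
      have := hnrm_smul (-1) u; simpa using this
    simpa [this] using hu1
  have key : γ * expLoss x w ≤ ⟪g, -u⟫ := by
    have hgexp : ⟪g, -u⟫ = ∑ n, Real.exp (-⟪w, x n⟫) * ⟪x n, u⟫ := by
      rw [hg, expLossGrad, inner_neg_neg, sum_inner]
      congr 1; ext n
      rw [real_inner_smul_left]
    rw [hgexp, expLoss, Finset.mul_sum]
    refine Finset.sum_le_sum fun n _ => ?_
    have h1 : γ ≤ ⟪x n, u⟫ := by
      rw [hγeq]; exact Finset.inf'_le _ (Finset.mem_univ n)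
    have h2 : 0 < Real.exp (-⟪w, x n⟫) := Real.exp_pos _
    nlinarith
  calc γ * expLoss x w ≤ ⟪g, -u⟫ := key
  _ ≤ dualNorm nrm g := le_csSup hbdd hmem
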